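/- arXiv:1803.08011 — 3 statements merged into one kernel-verified Lean document; each statement's English description precedes it below -/
import Mathlib

section
/- There is an absolute constant c > 0 such that for every continuously differentiable function f : 𝕋 → ℝ with mean value f̄ = ∫_𝕋 f(x) dx, with f not constant, and whose set of critical points {x ∈ 𝕋 : f′(x) = 0} is finite, one has (#{x ∈ 𝕋 : f′(x) = 0}) · ‖f − f̄‖_{L²(𝕋)} ≥ c ‖f′‖²_{L¹(𝕋)} / ‖f′‖_{L^∞(𝕋)}. -/
open MeasureTheory

/-- Lipschitz bound from a bound on the derivative. -/
lemma aux_lip {f f' : ℝ → ℝ} (hd : ∀ x, HasDerivAt f (f' x) x) (hc : Continuous f')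
    {S : ℝ} (hS : ∀ x, |f' x| ≤ S) (x y : ℝ) : |f x - f y| ≤ S * |x - y| := by
  have h1 : (∫ t in y..x, f' t) = f x - f y :=
    intervalIntegral.integral_eq_sub_of_hasDerivAt (fun t _ => hd t)
      (hc.intervalIntegrable _ _)
  rw [← h1, ← Real.norm_eq_abs]
  exact intervalIntegral.norm_integral_le_of_norm_le_const
    (fun t _ => by rw [Real.norm_eq_abs]; exact hS t)

/-- A continuous function with no zero on an open interval has a constant sign on the
closed interval. -/
lemma aux_sign {g : ℝ → ℝ} (hg : Continuous g) {a b : ℝ} (hab : a < b)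
    (h : ∀ x ∈ Set.Ioo a b, g x ≠ 0) :
    (∀ x ∈ Set.Icc a b, 0 ≤ g x) ∨ (∀ x ∈ Set.Icc a b, g x ≤ 0) := by
  have hsign : (∀ x ∈ Set.Ioo a b, 0 ≤ g x) ∨ (∀ x ∈ Set.Ioo a b, g x ≤ 0) := by
    by_contra hcon
    push_neg at hcon
    obtain ⟨⟨x, hx, hgx⟩, ⟨y, hy, hgy⟩⟩ := hcon
    have hsub : Set.uIcc x y ⊆ Set.Ioo a b := Set.ordConnected_Ioo.uIcc_subset hx hy
    have h0 : (0 : ℝ) ∈ Set.uIcc (g x) (g y) := by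
      rw [Set.mem_uIcc]
      exact Or.inl ⟨hgx.le, hgy.le⟩
    obtain ⟨z, hz, hgz⟩ := intermediate_value_uIcc (hg.continuousOn (s := Set.uIcc x y)) h0
    exact h z (hsub hz) hgz
  rcases hsign with hs | hs
  · left
    have hclosed : IsClosed {x : ℝ | 0 ≤ g x} := isClosed_le continuous_const hg
    have : Set.Icc a b ⊆ {x : ℝ | 0 ≤ g x} := by
      rw [← closure_Ioo hab.ne]
      exact hclosed.closure_subset_iff.2 hs
    exact fun x hx => this hx
  · right
    have hclosed : IsClosed {x : ℝ | g x ≤ 0} := isClosed_le hg continuous_const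
    have : Set.Icc a b ⊆ {x : ℝ | g x ≤ 0} := by
      rw [← closure_Ioo hab.ne]
      exact hclosed.closure_subset_iff.2 hs
    exact fun x hx => this hx

/-- Key single-interval estimate: the L¹ distance of `f` to any constant `m` on `[a,b]`
is at least `(f b - f a)² / (16 S)` where `S` bounds `|f'|`. -/
lemma aux_key {f f' : ℝ → ℝ} (hd : ∀ x, HasDerivAt f (f' x) x) (hc : Continuous f')
    {S : ℝ} (hS : ∀ x, |f' x| ≤ S) (hS0 : 0 < S) {a b : ℝ} (hab : a ≤ b) (m : ℝ) :
    (f b - f a) ^ 2 / (16 * S) ≤ ∫ x in a..b, |f x - m| := by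
  have hf : Continuous f := by
    rw [continuous_iff_continuousAt]; exact fun x => (hd x).continuousAt
  have hint : ∀ c d : ℝ, IntervalIntegrable (fun x => |f x - m|) volume c d :=
    fun c d => ((hf.sub continuous_const).abs).intervalIntegrable c d
  set v := |f b - f a| with hv
  have hvsq : (f b - f a) ^ 2 = v ^ 2 := (sq_abs _).symm
  rcases (abs_nonneg (f b - f a)).eq_or_lt with h0 | hvpos
  · have hv0 : v = 0 := by rw [hv, ← h0]
    rw [hvsq, hv0]
    simpa using intervalIntegral.integral_nonneg hab (fun u _ => abs_nonneg _)
  · have hba : v ≤ S * (b - a) := by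
      have := aux_lip hd hc hS b a
      rwa [abs_of_nonneg (by linarith : (0:ℝ) ≤ b - a)] at this
    set δ := v / (4 * S) with hδ
    have hδpos : 0 < δ := by positivity
    have hSδ : S * δ = v / 4 := by
      rw [hδ]; field_simp
    have hδle : δ ≤ b - a := by
      rw [hδ, div_le_iff₀ (by positivity)]
      nlinarith
    have htri : v ≤ |f b - m| + |f a - m| := by
      calc v = |(f b - m) - (f a - m)| := by rw [hv]; congr 1; ring
      _ ≤ |f b - m| + |f a - m| := abs_sub _ _
    have hkey : v ^ 2 / (16 * S) = v / 4 * δ := by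
      rw [hδ]; field_simp; ring
    rcases le_or_gt (v / 2) |f b - m| with hcase | hcase
    · -- lower bound near b
      have hpt : ∀ x ∈ Set.Icc (b - δ) b, v / 4 ≤ |f x - m| := by
        intro x hx
        have h1 : |f b - f x| ≤ S * (b - x) := by
          have := aux_lip hd hc hS b x
          rwa [abs_of_nonneg (by linarith [hx.2] : (0:ℝ) ≤ b - x)] at this
        have h2 : S * (b - x) ≤ v / 4 := by
          have hbx : b - x ≤ δ := by linarith [hx.1]
          nlinarith
        have h3 : |f b - m| ≤ |f b - f x| + |f x - m| := by
          calc |f b - m| = |(f b - f x) + (f x - m)| := by congr 1; ring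
          _ ≤ |f b - f x| + |f x - m| := abs_add_le _ _
        linarith
      have hsplit : (∫ x in a..b, |f x - m|) =
          (∫ x in a..(b - δ), |f x - m|) + ∫ x in (b - δ)..b, |f x - m| :=
        (intervalIntegral.integral_add_adjacent_intervals (hint _ _) (hint _ _)).symm
      have h1 : 0 ≤ ∫ x in a..(b - δ), |f x - m| :=
        intervalIntegral.integral_nonneg (by linarith) (fun u _ => abs_nonneg _)
      have h2 : v / 4 * δ ≤ ∫ x in (b - δ)..b, |f x - m| := by
        have hc1 : (∫ _x in (b - δ)..b, (v / 4 : ℝ)) = v / 4 * δ := by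
          rw [intervalIntegral.integral_const]; simp; ring
        rw [← hc1]
        exact intervalIntegral.integral_mono_on (by linarith) intervalIntegrable_const
          (hint _ _) hpt
      rw [hvsq, hkey]
      linarith
    · -- lower bound near a
      have hfa : v / 2 ≤ |f a - m| := by linarith
      have hpt : ∀ x ∈ Set.Icc a (a + δ), v / 4 ≤ |f x - m| := by
        intro x hx
        have h1 : |f a - f x| ≤ S * (x - a) := by
          have := aux_lip hd hc hS x a
          rwa [abs_of_nonneg (by linarith [hx.1] : (0:ℝ) ≤ x - a),
            abs_sub_comm (f x) (f a)] at this
        have h2 : S * (x - a) ≤ v / 4 := by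
          have hxa : x - a ≤ δ := by linarith [hx.2]
          nlinarith
        have h3 : |f a - m| ≤ |f a - f x| + |f x - m| := by
          calc |f a - m| = |(f a - f x) + (f x - m)| := by congr 1; ring
          _ ≤ |f a - f x| + |f x - m| := abs_add_le _ _
        linarith
      have hsplit : (∫ x in a..b, |f x - m|) =
          (∫ x in a..(a + δ), |f x - m|) + ∫ x in (a + δ)..b, |f x - m| :=
        (intervalIntegral.integral_add_adjacent_intervals (hint _ _) (hint _ _)).symm
      have h1 : 0 ≤ ∫ x in (a + δ)..b, |f x - m| :=
        intervalIntegral.integral_nonneg (by linarith) (fun u _ => abs_nonneg _)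
      have h2 : v / 4 * δ ≤ ∫ x in a..(a + δ), |f x - m| := by
        have hc1 : (∫ _x in a..(a + δ), (v / 4 : ℝ)) = v / 4 * δ := by
          rw [intervalIntegral.integral_const]; simp; ring
        rw [← hc1]
        exact intervalIntegral.integral_mono_on (by linarith) intervalIntegrable_const
          (hint _ _) hpt
      rw [hvsq, hkey]
      linarith

/-- Corollary of Theorem 4: for a continuously differentiable, non-constant,
1-periodic function `f : ℝ → ℝ` (a `C¹` function on the torus) with mean value `f̄`
and finitely many critical points in a period,
`(#critical points) · ‖f - f̄‖_{L²} ≥ c ‖f'‖_{L¹}² / ‖f'‖_{L^∞}`. -/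
theorem stmt6 : ∃ c : ℝ, 0 < c ∧
    ∀ f f' : ℝ → ℝ, (∀ x, HasDerivAt f (f' x) x) → Continuous f' →
      Function.Periodic f 1 → (∃ x y, f x ≠ f y) →
      {x ∈ Set.Ico (0 : ℝ) 1 | f' x = 0}.Finite →
      c * (∫ x in (0:ℝ)..1, |f' x|) ^ 2 / (⨆ x, |f' x|) ≤
        ({x ∈ Set.Ico (0 : ℝ) 1 | f' x = 0}.ncard : ℝ) *
          Real.sqrt (∫ x in (0:ℝ)..1, (f x - ∫ y in (0:ℝ)..1, f y) ^ 2) := by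
  refine ⟨1/16, by norm_num, ?_⟩
  intro f f' hd hc hper hnc hfin
  set K := {x ∈ Set.Ico (0 : ℝ) 1 | f' x = 0} with hK
  have hf : Continuous f := by
    rw [continuous_iff_continuousAt]; exact fun x => (hd x).continuousAt
  -- f' is 1-periodic
  have hper' : Function.Periodic f' 1 := by
    intro x
    have h1 : HasDerivAt (fun y => f (y + 1)) (f' (x + 1) * 1) x :=
      (hd (x + 1)).comp x ((hasDerivAt_id x).add_const 1)
    have h2 : (fun y : ℝ => f (y + 1)) = f := funext fun y => hper y
    rw [h2, mul_one] at h1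
    exact h1.unique (hd x)
  have hfract : ∀ (g : ℝ → ℝ), Function.Periodic g 1 → ∀ x : ℝ, g (Int.fract x) = g x := by
    intro g hg x
    have := hg.sub_int_mul_eq (n := ⌊x⌋) (x := x)
    rwa [mul_one, Int.self_sub_floor] at this
  set S := ⨆ x, |f' x| with hSdef
  have hrange : Set.range (fun x => |f' x|) = (fun x => |f' x|) '' Set.Icc 0 1 := by
    apply Set.Subset.antisymm
    · rintro _ ⟨x, rfl⟩
      refine ⟨Int.fract x, ⟨Int.fract_nonneg x, (Int.fract_lt_one x).le⟩, ?_⟩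
      simp only [hfract f' hper' x]
    · exact Set.image_subset_range _ _
  have hbddA : BddAbove (Set.range fun x => |f' x|) := by
    rw [hrange]
    exact (isCompact_Icc.image hc.abs).bddAbove
  have hS : ∀ x, |f' x| ≤ S := fun x => le_ciSup hbddA x
  have hS0 : 0 < S := by
    by_contra hcon
    push_neg at hcon
    obtain ⟨x, y, hxy⟩ := hnc
    apply hxy
    have h1 := aux_lip hd hc hS x y
    have h2 : S * |x - y| ≤ 0 := mul_nonpos_of_nonpos_of_nonneg hcon (abs_nonneg _)
    have h3 : |f x - f y| = 0 := le_antisymm (h1.trans h2) (abs_nonneg _)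
    exact sub_eq_zero.1 (abs_eq_zero.1 h3)
  -- there is a critical point: the global maximum
  obtain ⟨z, hz, hzmax⟩ := isCompact_Icc.exists_isMaxOn (Set.nonempty_Icc.2 zero_le_one)
    hf.continuousOn
  have hz'K : Int.fract z ∈ K := by
    have hmax : ∀ x, f x ≤ f (Int.fract z) := by
      intro x
      rw [hfract f hper z]
      have : f (Int.fract x) ≤ f z :=
        (isMaxOn_iff.1 hzmax) _ ⟨Int.fract_nonneg x, (Int.fract_lt_one x).le⟩
      rwa [hfract f hper x] at this
    refine ⟨⟨Int.fract_nonneg z, Int.fract_lt_one z⟩, ?_⟩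
    exact IsLocalMax.hasDerivAt_eq_zero
      (Filter.Eventually.of_forall fun x => hmax x) (hd _)
  have hKne : hfin.toFinset.Nonempty := ⟨_, hfin.mem_toFinset.2 hz'K⟩
  set n := hfin.toFinset.card with hn
  have hn0 : 0 < n := Finset.card_pos.2 hKne
  set e := hfin.toFinset.orderIsoOfFin hn.symm with he
  set E : ℕ → ℝ := fun j => if h : j < n then ((e ⟨j, h⟩ : hfin.toFinset) : ℝ)
    else ((e ⟨0, hn0⟩ : hfin.toFinset) : ℝ) + 1 with hE
  have hEK : ∀ j, ∀ h : j < n, E j ∈ K := by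
    intro j h
    have h2 : ((e ⟨j, h⟩ : hfin.toFinset) : ℝ) ∈ hfin.toFinset := (e ⟨j, h⟩).2
    simp only [hE, dif_pos h]
    exact hfin.mem_toFinset.1 h2
  have hEn : E n = E 0 + 1 := by
    simp only [hE, dif_neg (lt_irrefl n), dif_pos hn0]
  -- order helpers
  have hEe : ∀ (i : ℕ) (hi : i < n) (k : Fin n),
      (E i < ((e k : hfin.toFinset) : ℝ) ↔ i < (k : ℕ)) := by
    intro i hi k
    simp only [hE, dif_pos hi]
    rw [Subtype.coe_lt_coe, e.lt_iff_lt, Fin.lt_def]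
  have hEe' : ∀ (i : ℕ) (hi : i < n) (k : Fin n),
      (((e k : hfin.toFinset) : ℝ) < E i ↔ (k : ℕ) < i) := by
    intro i hi k
    simp only [hE, dif_pos hi]
    rw [Subtype.coe_lt_coe, e.lt_iff_lt, Fin.lt_def]
  have hadj : ∀ j, j < n → E j < E (j + 1) := by
    intro j hj
    by_cases h1 : j + 1 < n
    · have : (⟨j, hj⟩ : Fin n) < ⟨j + 1, h1⟩ := Fin.mk_lt_mk.2 (Nat.lt_succ_self j)
      have h2 := Subtype.coe_lt_coe.2 (e.strictMono this)
      simp only [hE, dif_pos hj, dif_pos h1]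
      exact h2
    · have hlt1 : E j < 1 := (hEK j hj).1.2
      have hge0 : (0:ℝ) ≤ E 0 := (hEK 0 hn0).1.1
      have hEj1 : E (j + 1) = E 0 + 1 := by
        have : j + 1 = n := by omega
        rw [this, hEn]
      rw [hEj1]; linarith
  have hsurj : ∀ y, y ∈ K → ∃ k : Fin n, ((e k : hfin.toFinset) : ℝ) = y := by
    intro y hy
    obtain ⟨k, hk⟩ := e.surjective ⟨y, hfin.mem_toFinset.2 hy⟩
    exact ⟨k, congrArg Subtype.val hk⟩
  -- no critical points inside the open subintervals
  have hne : ∀ j, j < n → ∀ x ∈ Set.Ioo (E j) (E (j + 1)), f' x ≠ 0 := by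
    intro j hj x hx hfx
    have hEj0 : 0 ≤ E j := (hEK j hj).1.1
    rcases lt_or_ge x 1 with hx1 | hx1
    · have hxK : x ∈ K := ⟨⟨le_trans hEj0 hx.1.le, hx1⟩, hfx⟩
      obtain ⟨k, hk⟩ := hsurj x hxK
      have ha : j < (k : ℕ) := (hEe j hj k).1 (hk ▸ hx.1)
      by_cases h1 : j + 1 < n
      · have hb : (k : ℕ) < j + 1 := (hEe' (j + 1) h1 k).1 (hk ▸ hx.2)
        omega
      · have := k.2; omega
    · have hj1 : j + 1 = n := by
        by_contra h1
        have h2 : j + 1 < n := by omega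
        have h3 : E (j + 1) < 1 := (hEK (j + 1) h2).1.2
        linarith [hx.2]
      have hxn : x < E 0 + 1 := by
        have := hx.2; rw [hj1, hEn] at this; exact this
      have hyK : x - 1 ∈ K := by
        refine ⟨⟨by linarith, ?_⟩, ?_⟩
        · have hE01 : E 0 < 1 := (hEK 0 hn0).1.2
          linarith
        · rw [hper'.sub_eq x]; exact hfx
      obtain ⟨k, hk⟩ := hsurj _ hyK
      have hlt : ((e k : hfin.toFinset) : ℝ) < E 0 := by rw [hk]; linarith
      have := (hEe' 0 hn0 k).1 hlt
      omega
  -- mean value and the two sums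
  set fbar := ∫ y in (0:ℝ)..1, f y with hfbar
  have hintabs : ∀ k, k < n → IntervalIntegrable (fun x => |f' x|) volume (E k) (E (k + 1)) :=
    fun k _ => hc.abs.intervalIntegrable _ _
  have hintg : ∀ k, k < n →
      IntervalIntegrable (fun x => |f x - fbar|) volume (E k) (E (k + 1)) :=
    fun k _ => ((hf.sub continuous_const).abs).intervalIntegrable _ _
  have hsum1 : ∑ j ∈ Finset.range n, ∫ x in E j..E (j + 1), |f' x| =
      ∫ x in (E 0)..(E n), |f' x| :=
    intervalIntegral.sum_integral_adjacent_intervals hintabs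
  have hsum2 : ∑ j ∈ Finset.range n, ∫ x in E j..E (j + 1), |f x - fbar| =
      ∫ x in (E 0)..(E n), |f x - fbar| :=
    intervalIntegral.sum_integral_adjacent_intervals hintg
  have hVshift : (∫ x in (E 0)..(E n), |f' x|) = ∫ x in (0:ℝ)..1, |f' x| := by
    have hpabs : Function.Periodic (fun x => |f' x|) 1 := fun x => by simp [hper' x]
    have h2 := hpabs.intervalIntegral_add_eq (E 0) 0
    rw [zero_add] at h2
    rw [hEn]; exact h2
  have hLshift : (∫ x in (E 0)..(E n), |f x - fbar|) = ∫ x in (0:ℝ)..1, |f x - fbar| := by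
    have hpabs : Function.Periodic (fun x => |f x - fbar|) 1 := fun x => by simp [hper x]
    have h2 := hpabs.intervalIntegral_add_eq (E 0) 0
    rw [zero_add] at h2
    rw [hEn]; exact h2
  -- variation over each monotone piece
  have hvar : ∀ j, j < n → (∫ x in E j..E (j + 1), |f' x|) = |f (E (j + 1)) - f (E j)| := by
    intro j hj
    have hab := hadj j hj
    have hftc : (∫ x in E j..E (j + 1), f' x) = f (E (j + 1)) - f (E j) :=
      intervalIntegral.integral_eq_sub_of_hasDerivAt (fun t _ => hd t)
        (hc.intervalIntegrable _ _)
    rcases aux_sign hc hab (hne j hj) with hsgn | hsgn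
    · have heq : Set.EqOn (fun x => |f' x|) f' (Set.uIcc (E j) (E (j + 1))) := by
        intro x hx
        rw [Set.uIcc_of_le hab.le] at hx
        exact abs_of_nonneg (hsgn x hx)
      rw [intervalIntegral.integral_congr heq, hftc]
      have h4 : 0 ≤ f (E (j + 1)) - f (E j) := by
        rw [← hftc]
        exact intervalIntegral.integral_nonneg hab.le fun u hu => hsgn u hu
      rw [abs_of_nonneg h4]
    · have heq : Set.EqOn (fun x => |f' x|) (fun x => -f' x) (Set.uIcc (E j) (E (j + 1))) := by
        intro x hx
        rw [Set.uIcc_of_le hab.le] at hx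
        exact abs_of_nonpos (hsgn x hx)
      rw [intervalIntegral.integral_congr heq, intervalIntegral.integral_neg, hftc]
      have h4 : f (E (j + 1)) - f (E j) ≤ 0 := by
        rw [← hftc, ← neg_nonneg, ← intervalIntegral.integral_neg]
        exact intervalIntegral.integral_nonneg hab.le fun u hu => neg_nonneg.2 (hsgn u hu)
      rw [abs_of_nonpos h4]
  set V := ∫ x in (0:ℝ)..1, |f' x| with hV
  set L := ∫ x in (0:ℝ)..1, |f x - fbar| with hLdef
  set Q := ∫ x in (0:ℝ)..1, (f x - fbar) ^ 2 with hQ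
  have hsumv : ∑ j ∈ Finset.range n, |f (E (j + 1)) - f (E j)| = V := by
    rw [← hVshift, ← hsum1]
    exact Finset.sum_congr rfl fun j hjm => (hvar j (Finset.mem_range.1 hjm)).symm
  -- per-interval L¹ lower bound
  have hsum3 : ∑ j ∈ Finset.range n, |f (E (j + 1)) - f (E j)| ^ 2 / (16 * S) ≤ L := by
    rw [← hLshift, ← hsum2]
    refine Finset.sum_le_sum fun j hjm => ?_
    have hj := Finset.mem_range.1 hjm
    have h5 := aux_key hd hc hS hS0 (hadj j hj).le fbar
    rwa [← sq_abs] at h5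
  have hL0 : 0 ≤ L :=
    intervalIntegral.integral_nonneg zero_le_one fun u _ => abs_nonneg _
  -- L¹ ≤ L² on the unit interval
  have hLQ : L ^ 2 ≤ Q := by
    have hptw : ∀ x ∈ Set.Icc (0:ℝ) 1, 2 * L * |f x - fbar| ≤ (f x - fbar) ^ 2 + L ^ 2 := by
      intro x _
      nlinarith [sq_nonneg (|f x - fbar| - L), sq_abs (f x - fbar)]
    have hl : (∫ x in (0:ℝ)..1, 2 * L * |f x - fbar|) = 2 * L * L := by
      rw [intervalIntegral.integral_const_mul, ← hLdef]
    have hr : (∫ x in (0:ℝ)..1, ((f x - fbar) ^ 2 + L ^ 2)) = Q + L ^ 2 := by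
      rw [intervalIntegral.integral_add (f := fun x => (f x - fbar) ^ 2) (g := fun _ => L ^ 2) (((hf.sub continuous_const).pow 2).intervalIntegrable _ _)
        (intervalIntegrable_const), intervalIntegral.integral_const]
      simp [hQ]
    have hmono := intervalIntegral.integral_mono_on (μ := volume) (f := fun x => 2 * L * |f x - fbar|)
      (g := fun x => (f x - fbar) ^ 2 + L ^ 2) zero_le_one
      ((continuous_const.mul (hf.sub continuous_const).abs).intervalIntegrable _ _)
      ((((hf.sub continuous_const).pow 2).add continuous_const).intervalIntegrable _ _) hptw
    rw [hl, hr] at hmono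
    nlinarith
  have hLD : L ≤ Real.sqrt Q := Real.le_sqrt_of_sq_le hLQ
  -- Cauchy–Schwarz over the pieces
  have hCS : V ^ 2 ≤ (n : ℝ) * ∑ j ∈ Finset.range n, |f (E (j + 1)) - f (E j)| ^ 2 := by
    rw [← hsumv]
    have := sq_sum_le_card_mul_sum_sq
      (s := Finset.range n) (f := fun j => |f (E (j + 1)) - f (E j)|)
    simpa using this
  have hsum4 : ∑ j ∈ Finset.range n, |f (E (j + 1)) - f (E j)| ^ 2 ≤ 16 * S * L := by
    rw [← Finset.sum_div] at hsum3
    have h5 := (div_le_iff₀ (by linarith : (0:ℝ) < 16 * S)).1 hsum3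
    linarith [h5]
  -- conclude
  have hncard : ((K.ncard : ℝ)) = (n : ℝ) := by
    rw [Set.ncard_eq_toFinset_card _ hfin]
  have hQ0 : 0 ≤ Real.sqrt Q := Real.sqrt_nonneg _
  rw [hncard, div_le_iff₀ hS0]
  have hn0' : (0:ℝ) ≤ (n : ℝ) := Nat.cast_nonneg n
  have h6 : V ^ 2 ≤ (n : ℝ) * (16 * S * L) := by
    calc V ^ 2 ≤ (n : ℝ) * ∑ j ∈ Finset.range n, |f (E (j + 1)) - f (E j)| ^ 2 := hCS
    _ ≤ (n : ℝ) * (16 * S * L) := by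
        exact mul_le_mul_of_nonneg_left hsum4 hn0'
  have h7 : (n : ℝ) * (16 * S * L) ≤ (n : ℝ) * (16 * S * Real.sqrt Q) := by
    have : 16 * S * L ≤ 16 * S * Real.sqrt Q :=
      mul_le_mul_of_nonneg_left hLD (by linarith : (0:ℝ) ≤ 16 * S)
    exact mul_le_mul_of_nonneg_left this hn0'
  nlinarith [h6, h7]
end

section
/- There is an absolute constant c > 0 such that for every continuous function f : 𝕋 → ℝ with f ≥ 0, not identically 0 and not constant, with mean value f̄ = ∫_𝕋 f(x) dx, and such that the level set {x ∈ 𝕋 : f(x) = f̄} is finite, one has (#{x ∈ 𝕋 : f(x) = f̄}) · W₁(f dx, f̄ dx) ≥ c ‖f − f̄‖²_{L¹(𝕋)} / ‖f‖_{L^∞(𝕋)}. -/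
open MeasureTheory
open scoped ENNReal

open Set Metric
open scoped NNReal

lemma coe_sub_intCast (x : ℝ) (n : ℤ) : ((x - n : ℝ) : UnitAddCircle) = (x : UnitAddCircle) := by
  have h : ((n : ℝ) : UnitAddCircle) = 0 := by
    rw [AddCircle.coe_eq_zero_iff]; exact ⟨n, by simp⟩
  rw [show ((x - n : ℝ) : UnitAddCircle) = ((x:ℝ) : UnitAddCircle) - ((n:ℝ) : UnitAddCircle) from
    QuotientAddGroup.mk_sub _ _ _, h, sub_zero]

lemma lift_norm (u : UnitAddCircle) : ∃ r : ℝ, (r : UnitAddCircle) = u ∧ |r| = ‖u‖ := by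
  obtain ⟨x, rfl⟩ := QuotientAddGroup.mk_surjective u
  refine ⟨x - round x, coe_sub_intCast x (round x), ?_⟩
  rw [show ((x : ℝ) : UnitAddCircle) = (x : UnitAddCircle) from rfl, AddCircle.norm_eq]
  norm_num

lemma norm_coe_le (r : ℝ) : ‖(r : UnitAddCircle)‖ ≤ |r| := by
  simpa using QuotientAddGroup.norm_mk_le_norm (S := AddSubgroup.zmultiples (1:ℝ)) (m := r)

lemma crossing {g : UnitAddCircle → ℝ} (hg : Continuous g) {x y : UnitAddCircle}
    (hx : 0 < g x) (hy : g y < 0) :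
    ∃ z, g z = 0 ∧ dist x z + dist z y ≤ dist x y := by
  obtain ⟨r, hr, hrn⟩ := lift_norm (y - x)
  have hd : dist x y = |r| := by rw [hrn, dist_eq_norm, ← norm_neg, neg_sub]
  set h : ℝ → ℝ := fun t => g (x + ((t * r : ℝ) : UnitAddCircle)) with hh
  have hc : Continuous h :=
    hg.comp (continuous_const.add ((AddCircle.continuous_mk' 1).comp (continuous_id.mul continuous_const)))
  have h0 : h 0 = g x := by simp [hh]
  have h1 : h 1 = g y := by
    simp only [hh, one_mul, hr]
    congr 1; abel
  have : (0:ℝ) ∈ h '' Icc 0 1 := by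
    apply intermediate_value_Icc' (by norm_num) hc.continuousOn
    rw [h0, h1]; constructor <;> linarith
  obtain ⟨t, ht, htz⟩ := this
  refine ⟨x + ((t * r : ℝ) : UnitAddCircle), htz ▸ rfl, ?_⟩
  have d1 : dist x (x + ((t * r : ℝ) : UnitAddCircle)) ≤ t * |r| := by
    rw [dist_self_add_right]
    calc ‖((t * r : ℝ) : UnitAddCircle)‖ ≤ |t * r| := norm_coe_le _
      _ = t * |r| := by rw [abs_mul, abs_of_nonneg ht.1]
  have d2 : dist (x + ((t * r : ℝ) : UnitAddCircle)) y ≤ (1 - t) * |r| := by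
    have : y - (x + ((t * r : ℝ) : UnitAddCircle)) = (((1 - t) * r : ℝ) : UnitAddCircle) := by
      have e1 : (((1 - t) * r : ℝ) : UnitAddCircle)
          = ((r : ℝ) : UnitAddCircle) - ((t * r : ℝ) : UnitAddCircle) := by
        rw [show ((1 - t) * r : ℝ) = r - t * r by ring, QuotientAddGroup.mk_sub]
      rw [e1, hr]
      abel
    rw [dist_eq_norm, ← norm_neg, neg_sub, this]
    calc ‖(((1 - t) * r : ℝ) : UnitAddCircle)‖ ≤ |(1 - t) * r| := norm_coe_le _
      _ = (1 - t) * |r| := by rw [abs_mul, abs_of_nonneg (by linarith [ht.2])]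
  rw [hd]
  nlinarith [d1, d2]

lemma sign_abs_le (a : ℝ) : |Real.sign a| ≤ 1 := by
  rcases lt_trichotomy a 0 with h|h|h
  · rw [Real.sign_of_neg h]; norm_num
  · rw [h, Real.sign_zero]; norm_num
  · rw [Real.sign_of_pos h]; norm_num

lemma phi_lip {g : UnitAddCircle → ℝ} (hg : Continuous g) :
    LipschitzWith 1 (fun x => Real.sign (g x) * infDist x {w : UnitAddCircle | g w = 0}) := by
  set Z := {w : UnitAddCircle | g w = 0} with hZ
  set φ := fun x => Real.sign (g x) * infDist x Z with hφ
  have hDlip := lipschitz_infDist_pt (α := UnitAddCircle) Z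
  have key : ∀ x y, 0 < g x → g y < 0 → |φ x - φ y| ≤ dist x y := by
    intro x y hx hy
    obtain ⟨z, hz, hd⟩ := crossing hg hx hy
    have hzZ : z ∈ Z := hz
    have e : φ x - φ y = infDist x Z + infDist y Z := by
      simp only [hφ, Real.sign_of_pos hx, Real.sign_of_neg hy]; ring
    rw [e, abs_of_nonneg (add_nonneg infDist_nonneg infDist_nonneg)]
    calc infDist x Z + infDist y Z ≤ dist x z + dist y z :=
          add_le_add (infDist_le_dist_of_mem hzZ) (infDist_le_dist_of_mem hzZ)
      _ ≤ dist x y := by rw [dist_comm y z]; exact hd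
  have zero_case : ∀ x y, g x = 0 → |φ x - φ y| ≤ dist x y := by
    intro x y hx
    have : φ x = 0 := by simp [hφ, hx, Real.sign_zero]
    rw [this, zero_sub, abs_neg, hφ]
    calc |Real.sign (g y) * infDist y Z| ≤ 1 * |infDist y Z| := by
          rw [abs_mul]; exact mul_le_mul_of_nonneg_right (sign_abs_le _) (abs_nonneg _)
      _ = infDist y Z := by rw [one_mul, abs_of_nonneg infDist_nonneg]
      _ ≤ dist y x := infDist_le_dist_of_mem hx
      _ = dist x y := dist_comm y x
  have same : ∀ x y, Real.sign (g x) = Real.sign (g y) → |φ x - φ y| ≤ dist x y := by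
    intro x y hs
    have : φ x - φ y = Real.sign (g x) * (infDist x Z - infDist y Z) := by
      simp only [hφ]; rw [hs]; ring
    rw [this, abs_mul]
    calc |Real.sign (g x)| * |infDist x Z - infDist y Z| ≤ 1 * dist x y := by
          apply mul_le_mul (sign_abs_le _) ?_ (abs_nonneg _) zero_le_one
          have := hDlip.dist_le_mul x y
          simp only [ENNReal.coe_one, NNReal.coe_one, one_mul, Real.dist_eq] at this
          exact this
      _ = dist x y := one_mul _
  rw [lipschitzWith_iff_dist_le_mul]
  intro x y
  simp only [ENNReal.coe_one, NNReal.coe_one, one_mul, Real.dist_eq]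
  rcases lt_trichotomy (g x) 0 with hx|hx|hx
  · rcases lt_trichotomy (g y) 0 with hy|hy|hy
    · exact same x y (by rw [Real.sign_of_neg hx, Real.sign_of_neg hy])
    · rw [← abs_neg, neg_sub, dist_comm]; exact zero_case y x hy
    · rw [← abs_neg, neg_sub, dist_comm]; exact key y x hy hx
  · exact zero_case x y hx
  · rcases lt_trichotomy (g y) 0 with hy|hy|hy
    · exact key x y hx hy
    · rw [← abs_neg, neg_sub, dist_comm]; exact zero_case y x hy
    · exact same x y (by rw [Real.sign_of_pos hx, Real.sign_of_pos hy])

open scoped ENNReal NNReal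


/-- The `p`-Wasserstein distance between measures on the torus `𝕋 = ℝ/ℤ`,
defined as the infimum of `(∫ |x-y|^p dγ)^(1/p)` over all couplings `γ`. -/
noncomputable def Wdist (p : ℝ) (μ ν : Measure UnitAddCircle) : ℝ :=
  sInf { c : ℝ | ∃ γ : Measure (UnitAddCircle × UnitAddCircle),
      γ.map Prod.fst = μ ∧ γ.map Prod.snd = ν ∧
      c = (∫ z, dist z.1 z.2 ^ p ∂γ) ^ (1 / p) }

/-- The strengthened form of Theorem 4: for continuous `f ≥ 0` on `𝕋`, not
identically `0` and not constant, with mean `f̄` and finite level set `{f = f̄}`,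
`#{x : f(x) = f̄} · W₁(f dx, f̄ dx) ≥ c ‖f - f̄‖₁² / ‖f‖_∞`. -/
theorem stmt7 : ∃ c : ℝ, 0 < c ∧
    ∀ f : UnitAddCircle → ℝ, Continuous f → (∀ x, 0 ≤ f x) → (∃ x, f x ≠ 0) →
      (∃ x y, f x ≠ f y) →
      {x : UnitAddCircle | f x = ∫ y, f y}.Finite →
      c * (∫ x, |f x - ∫ y, f y|) ^ 2 / (⨆ x, |f x|) ≤
        ({x : UnitAddCircle | f x = ∫ y, f y}.ncard : ℝ) *
          Wdist 1 (volume.withDensity fun x => ENNReal.ofReal (f x))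
            (volume.withDensity fun _ => ENNReal.ofReal (∫ x, f x)) := by
  refine ⟨1/8, by norm_num, ?_⟩
  intro f hf hf0 hfx hfnc hfin
  haveI hfact : Fact ((0:ℝ) < 1) := ⟨zero_lt_one⟩
  haveI hprob : IsProbabilityMeasure (volume : Measure UnitAddCircle) :=
    ⟨by rw [AddCircle.measure_univ]; simp⟩
  set fbar : ℝ := ∫ y, f y with hfbar
  set Z : Set UnitAddCircle := {x : UnitAddCircle | f x = fbar} with hZdef
  set g : UnitAddCircle → ℝ := fun x => f x - fbar with hgdef
  have hg : Continuous g := hf.sub continuous_const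
  have hZg : {w : UnitAddCircle | g w = 0} = Z := by
    ext w; simp [hgdef, sub_eq_zero, hZdef]
  set M : ℝ := ⨆ x, |f x| with hM
  set n : ℕ := Z.ncard with hn
  set D : UnitAddCircle → ℝ := fun x => infDist x Z with hDdef
  have hDcont : Continuous D := (lipschitz_infDist_pt Z).continuous
  set φ : UnitAddCircle → ℝ := fun x => Real.sign (g x) * D x with hφdef
  have hφlip : LipschitzWith 1 φ := by
    have := phi_lip hg
    rwa [hZg] at this
  have hφcont : Continuous φ := hφlip.continuous
  -- basic facts
  have hint_f : Integrable f volume :=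
    hf.integrable_of_hasCompactSupport (HasCompactSupport.of_compactSpace f)
  have hbdd : BddAbove (Set.range fun x => |f x|) :=
    (isCompact_range (hf.abs)).bddAbove
  have hfM : ∀ x, |f x| ≤ M := fun x => le_ciSup hbdd x
  have hM0 : 0 < M := by
    obtain ⟨x₀, hx₀⟩ := hfx
    exact lt_of_lt_of_le (abs_pos.mpr hx₀) (hfM x₀)
  have hfbar0 : 0 ≤ fbar := integral_nonneg hf0
  have hfbarM : fbar ≤ M := by
    calc fbar ≤ ∫ (_ : UnitAddCircle), M :=
          integral_mono hint_f (integrable_const M) (fun x => (le_abs_self _).trans (hfM x))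
      _ = M := by simp
  have hgM : ∀ x, |g x| ≤ M := by
    intro x
    rw [hgdef, abs_sub_le_iff]
    constructor
    · have := (abs_le.mp (hfM x)).2; linarith [hfbar0]
    · linarith [hf0 x, hfbarM]
  have hint_g : Integrable g volume := hint_f.sub (integrable_const fbar)
  have hint_absg : Integrable (fun x => |g x|) volume := hint_g.abs
  have h_mean : ∫ x, g x = 0 := by
    rw [hgdef]
    rw [integral_sub hint_f (integrable_const fbar)]
    simp [hfbar]
  set a : ℝ := ∫ x, |g x| with ha
  -- positivity of a
  have hgne : ∃ x, g x ≠ 0 := by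
    obtain ⟨x, y, hxy⟩ := hfnc
    by_cases hx : g x = 0
    · refine ⟨y, fun hy => hxy ?_⟩
      have : f x = fbar := by have := hx; rw [hgdef] at this; linarith [sub_eq_zero.mp this]
      have h2 : f y = fbar := by have := hy; rw [hgdef] at this; linarith [sub_eq_zero.mp this]
      rw [this, h2]
    · exact ⟨x, hx⟩
  have ha0 : 0 < a := by
    obtain ⟨x₁, hx₁⟩ := hgne
    refine (integral_pos_iff_support_of_nonneg_ae
      (Filter.Eventually.of_forall (fun x => abs_nonneg (g x))) hint_absg).mpr ?_
    refine (hg.abs.isOpen_support).measure_pos volume ⟨x₁, ?_⟩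
    simp [Function.mem_support, abs_ne_zero, hx₁]
  -- Z is nonempty
  have hpos_int : ∀ h : UnitAddCircle → ℝ, Continuous h → (∀ x, 0 < h x) →
      0 < ∫ x, h x := by
    intro h hc hpos
    refine (integral_pos_iff_support_of_nonneg_ae
      (Filter.Eventually.of_forall (fun x => (hpos x).le))
      (hc.integrable_of_hasCompactSupport (HasCompactSupport.of_compactSpace h))).mpr ?_
    have : Function.support h = Set.univ := by
      ext x; simp [Function.mem_support, (hpos x).ne']
    rw [this]
    simp
  have hZne : Z.Nonempty := by
    rw [← hZg]
    by_contra hne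
    have hgnz : ∀ x, g x ≠ 0 := by
      intro x hx
      exact hne ⟨x, hx⟩
    by_cases hp : ∃ x, 0 < g x
    · obtain ⟨x, hx⟩ := hp
      by_cases hq : ∃ y, g y < 0
      · obtain ⟨y, hy⟩ := hq
        obtain ⟨z, hz, -⟩ := crossing hg hx hy
        exact hgnz z hz
      · push_neg at hq
        have : ∀ x, 0 < g x := fun x => lt_of_le_of_ne (hq x) (Ne.symm (hgnz x))
        have := hpos_int g hg this
        rw [h_mean] at this
        exact lt_irrefl 0 this
    · push_neg at hp
      have : ∀ x, 0 < -g x := fun x =>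
        neg_pos.mpr (lt_of_le_of_ne (hp x) (hgnz x))
      have h2 := hpos_int (fun x => -g x) hg.neg this
      rw [integral_neg, h_mean, neg_zero] at h2
      exact lt_irrefl 0 h2
  have hn0 : 0 < n := by
    rw [hn]
    exact (Set.ncard_pos hfin).mpr hZne
  have hn0' : (0:ℝ) < n := by exact_mod_cast hn0
  have hfbarpos : 0 < fbar := by
    obtain ⟨x₀, hx₀⟩ := hfx
    rw [hfbar]
    refine (integral_pos_iff_support_of_nonneg_ae
      (Filter.Eventually.of_forall hf0) hint_f).mpr ?_
    exact (hf.isOpen_support).measure_pos volume ⟨x₀, hx₀⟩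
  -- Step A : lower bound on b
  set T : ℝ := a / (4*M*n) with hTdef
  have hT0 : 0 < T := by
    rw [hTdef]; positivity
  set b : ℝ := ∫ x, |g x| * D x with hb
  set S : Set UnitAddCircle := {x | T ≤ D x} with hSdef
  have hSmeas : MeasurableSet S :=
    (isClosed_le continuous_const hDcont).measurableSet
  have int_gD : Integrable (fun x => |g x| * D x) volume :=
    (hg.abs.mul hDcont).integrable_of_hasCompactSupport (HasCompactSupport.of_compactSpace _)
  have h1 : ∫ x in S, |g x| * D x ≤ b :=
    setIntegral_le_integral int_gD (Filter.Eventually.of_forall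
      (fun x => mul_nonneg (abs_nonneg _) infDist_nonneg))
  have h2 : ∫ x in S, T * |g x| ≤ ∫ x in S, |g x| * D x := by
    refine setIntegral_mono_on ((hint_absg.const_mul T).integrableOn)
      (int_gD.integrableOn) hSmeas ?_
    intro x hx
    rw [mul_comm]
    exact mul_le_mul_of_nonneg_left hx (abs_nonneg _)
  have h3 : ∫ x in S, T * |g x| = T * ∫ x in S, |g x| := integral_const_mul T _
  have h4 : (∫ x in S, |g x|) + ∫ x in Sᶜ, |g x| = a :=
    integral_add_compl hSmeas hint_absg
  have h5 : ∫ x in Sᶜ, |g x| ≤ M * (volume Sᶜ).toReal := by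
    have := norm_setIntegral_le_of_norm_le_const (μ := volume) (s := Sᶜ)
      (f := fun x => |g x|) (C := M) (measure_lt_top _ _)
      (fun x _ => by rw [Real.norm_eq_abs, abs_abs]; exact hgM x)
    exact (le_abs_self _).trans (this)
  have h6 : (volume Sᶜ).toReal ≤ (n:ℝ) * (2*T) := by
    have hcover : Sᶜ ⊆ ⋃ z ∈ hfin.toFinset, closedBall z T := by
      intro x hx
      have hxlt : D x < T := not_le.mp hx
      obtain ⟨z, hzZ, hzd⟩ := (infDist_lt_iff hZne).mp hxlt
      exact Set.mem_biUnion (hfin.mem_toFinset.mpr hzZ) (mem_closedBall.mpr hzd.le)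
    have h6a : volume Sᶜ ≤ ∑ z ∈ hfin.toFinset, volume (closedBall z T) :=
      (measure_mono hcover).trans (measure_biUnion_finset_le _ _)
    have h6b : ∀ z : UnitAddCircle, volume (closedBall z T) ≤ ENNReal.ofReal (2*T) := by
      intro z
      rw [AddCircle.volume_closedBall]
      exact ENNReal.ofReal_le_ofReal (min_le_right _ _)
    have h6c : volume Sᶜ ≤ ENNReal.ofReal ((n:ℝ) * (2*T)) := by
      refine h6a.trans ?_
      calc ∑ z ∈ hfin.toFinset, volume (closedBall z T)
          ≤ ∑ _z ∈ hfin.toFinset, ENNReal.ofReal (2*T) :=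
            Finset.sum_le_sum (fun z _ => h6b z)
        _ = (hfin.toFinset.card : ℝ≥0∞) * ENNReal.ofReal (2*T) := by
            rw [Finset.sum_const, nsmul_eq_mul]
        _ = ENNReal.ofReal ((n:ℝ) * (2*T)) := by
            rw [show ENNReal.ofReal ((n:ℝ) * (2*T)) = (n : ℝ≥0∞) * ENNReal.ofReal (2*T) by
              rw [ENNReal.ofReal_mul (by positivity), ENNReal.ofReal_natCast]]
            congr 2
            rw [hn, Set.ncard_eq_toFinset_card _ hfin]
    exact ENNReal.toReal_le_of_le_ofReal (by positivity) h6c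
  have hintS : ∫ x in S, |g x| ≥ a - M * ((n:ℝ) * (2*T)) := by
    have : ∫ x in Sᶜ, |g x| ≤ M * ((n:ℝ) * (2*T)) :=
      h5.trans (mul_le_mul_of_nonneg_left h6 hM0.le)
    linarith
  have stepA : a^2 / (8*M*n) ≤ b := by
    have hMn : M * ((n:ℝ) * (2*T)) = a / 2 := by
      rw [hTdef]; field_simp; ring
    have hbge : T * (a - M * ((n:ℝ) * (2*T))) ≤ b := by
      calc T * (a - M * ((n:ℝ) * (2*T))) ≤ T * ∫ x in S, |g x| :=
            mul_le_mul_of_nonneg_left hintS hT0.le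
        _ = ∫ x in S, T * |g x| := h3.symm
        _ ≤ ∫ x in S, |g x| * D x := h2
        _ ≤ b := h1
    have : T * (a - M * ((n:ℝ) * (2*T))) = a^2 / (8*M*n) := by
      rw [hMn, hTdef]; field_simp; ring
    linarith
  -- Step B : Kantorovich lower bound
  set μm : Measure UnitAddCircle := volume.withDensity (fun x => ENNReal.ofReal (f x)) with hμ
  set νm : Measure UnitAddCircle :=
    volume.withDensity (fun _ => ENNReal.ofReal fbar) with hν
  have hμuniv : μm Set.univ = ENNReal.ofReal fbar := by
    rw [hμ, withDensity_apply _ MeasurableSet.univ, setLIntegral_univ,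
      ← ofReal_integral_eq_lintegral_ofReal hint_f (Filter.Eventually.of_forall hf0)]
  have hνuniv : νm Set.univ = ENNReal.ofReal fbar := by
    rw [hν, withDensity_const, Measure.smul_apply, measure_univ, smul_eq_mul, mul_one]
  haveI hμfin : IsFiniteMeasure μm := ⟨by rw [hμuniv]; exact ENNReal.ofReal_lt_top⟩
  haveI hνfin : IsFiniteMeasure νm := ⟨by rw [hνuniv]; exact ENNReal.ofReal_lt_top⟩
  have hofne : ENNReal.ofReal fbar ≠ 0 := (ENNReal.ofReal_pos.mpr hfbarpos).ne'
  have hofnt : ENNReal.ofReal fbar ≠ ⊤ := ENNReal.ofReal_ne_top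
  set WS : Set ℝ := { c : ℝ | ∃ γ : Measure (UnitAddCircle × UnitAddCircle),
      γ.map Prod.fst = μm ∧ γ.map Prod.snd = νm ∧
      c = (∫ z, dist z.1 z.2 ^ (1:ℝ) ∂γ) ^ (1 / (1:ℝ)) } with hWS
  have hWSne : WS.Nonempty := by
    refine ⟨_, (ENNReal.ofReal fbar)⁻¹ • (μm.prod νm), ?_, ?_, rfl⟩
    · rw [Measure.map_smul, Measure.map_fst_prod, hνuniv, smul_smul,
        ENNReal.inv_mul_cancel hofne hofnt, one_smul]
    · rw [Measure.map_smul, Measure.map_snd_prod, hμuniv, smul_smul,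
        ENNReal.inv_mul_cancel hofne hofnt, one_smul]
  have hsign : ∀ x, g x * Real.sign (g x) = |g x| := by
    intro x
    rcases lt_trichotomy (g x) 0 with h|h|h
    · rw [Real.sign_of_neg h, abs_of_neg h]; ring
    · rw [h]; simp
    · rw [Real.sign_of_pos h, abs_of_pos h]; ring
  have int_fφ : Integrable (fun x => f x * φ x) volume :=
    (hf.mul hφcont).integrable_of_hasCompactSupport (HasCompactSupport.of_compactSpace _)
  have int_φ : Integrable φ volume :=
    hφcont.integrable_of_hasCompactSupport (HasCompactSupport.of_compactSpace _)
  have key3 : ∫ x, φ x ∂μm = ∫ x, f x * φ x := by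
    rw [hμ]
    rw [show (fun x => ENNReal.ofReal (f x))
        = (fun x => (((f x).toNNReal : ℝ≥0) : ℝ≥0∞)) from rfl]
    rw [integral_withDensity_eq_integral_smul
      (f := fun y => (f y).toNNReal) (hf.measurable.real_toNNReal) φ]
    congr 1
    funext x
    rw [NNReal.smul_def, Real.coe_toNNReal _ (hf0 x), smul_eq_mul]
  have key4 : ∫ x, φ x ∂νm = fbar * ∫ x, φ x := by
    rw [hν, withDensity_const, integral_smul_measure, ENNReal.toReal_ofReal hfbar0,
      smul_eq_mul]
  have key5 : (∫ x, f x * φ x) - fbar * ∫ x, φ x = b := by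
    rw [← integral_const_mul fbar φ, ← integral_sub int_fφ (int_φ.const_mul fbar), hb]
    congr 1
    funext x
    have : f x * φ x - fbar * φ x = g x * φ x := by rw [hgdef]; ring
    rw [this, hφdef]
    calc g x * (Real.sign (g x) * D x) = (g x * Real.sign (g x)) * D x := by ring
      _ = |g x| * D x := by rw [hsign x]
  have hWlb : ∀ c ∈ WS, b ≤ c := by
    rintro c ⟨γ, hγ1, hγ2, rfl⟩
    haveI hγfin : IsFiniteMeasure γ := by
      constructor
      have : γ Set.univ = μm Set.univ := by
        rw [← hγ1, Measure.map_apply measurable_fst MeasurableSet.univ]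
        simp
      rw [this, hμuniv]
      exact ENNReal.ofReal_lt_top
    have int_dist : Integrable (fun z : UnitAddCircle × UnitAddCircle => dist z.1 z.2) γ :=
      continuous_dist.integrable_of_hasCompactSupport (HasCompactSupport.of_compactSpace _)
    have int_φ1 : Integrable (fun z : UnitAddCircle × UnitAddCircle => φ z.1) γ :=
      (hφcont.comp continuous_fst).integrable_of_hasCompactSupport
        (HasCompactSupport.of_compactSpace _)
    have int_φ2 : Integrable (fun z : UnitAddCircle × UnitAddCircle => φ z.2) γ :=
      (hφcont.comp continuous_snd).integrable_of_hasCompactSupport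
        (HasCompactSupport.of_compactSpace _)
    have hpt : ∀ z : UnitAddCircle × UnitAddCircle, φ z.1 - φ z.2 ≤ dist z.1 z.2 := by
      intro z
      have := hφlip.dist_le_mul z.1 z.2
      simp only [ENNReal.coe_one, NNReal.coe_one, one_mul, Real.dist_eq] at this
      exact (le_abs_self _).trans this
    have key1 : ∫ z : UnitAddCircle × UnitAddCircle, φ z.1 ∂γ = ∫ x, φ x ∂μm := by
      rw [← hγ1, integral_map measurable_fst.aemeasurable hφcont.aestronglyMeasurable]
    have key2 : ∫ z : UnitAddCircle × UnitAddCircle, φ z.2 ∂γ = ∫ x, φ x ∂νm := by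
      rw [← hγ2, integral_map measurable_snd.aemeasurable hφcont.aestronglyMeasurable]
    have hbc : b ≤ ∫ z : UnitAddCircle × UnitAddCircle, dist z.1 z.2 ∂γ := by
      calc b = (∫ x, f x * φ x) - fbar * ∫ x, φ x := key5.symm
        _ = (∫ z : UnitAddCircle × UnitAddCircle, φ z.1 ∂γ)
            - ∫ z : UnitAddCircle × UnitAddCircle, φ z.2 ∂γ := by
            rw [key1, key2, key3, key4]
        _ = ∫ z : UnitAddCircle × UnitAddCircle, (φ z.1 - φ z.2) ∂γ :=
            (integral_sub int_φ1 int_φ2).symm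
        _ ≤ ∫ z : UnitAddCircle × UnitAddCircle, dist z.1 z.2 ∂γ :=
            integral_mono (int_φ1.sub int_φ2) int_dist hpt
    calc b ≤ ∫ z : UnitAddCircle × UnitAddCircle, dist z.1 z.2 ∂γ := hbc
      _ = (∫ z : UnitAddCircle × UnitAddCircle, dist z.1 z.2 ^ (1:ℝ) ∂γ) ^ (1/(1:ℝ)) := by
          norm_num
  have hW : b ≤ Wdist 1 μm νm := by
    rw [Wdist]
    exact le_csInf hWSne hWlb
  -- final assembly
  have hWnn : a^2/(8*M*n) ≤ Wdist 1 μm νm := le_trans stepA hW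
  have hfinal : 1/8 * a^2 / M ≤ (n:ℝ) * Wdist 1 μm νm := by
    calc 1/8 * a^2 / M = (n:ℝ) * (a^2/(8*M*n)) := by field_simp
      _ ≤ (n:ℝ) * Wdist 1 μm νm := mul_le_mul_of_nonneg_left hWnn hn0'.le
  exact hfinal
end

section
/- There is an absolute constant c > 0 with the following property. Let f : 𝕋 → ℝ be continuous with f ≥ 0, not identically 0, with mean value f̄ = ∫_𝕋 f(x) dx, and let T : 𝕋 → 𝕋 be a Borel map whose pushforward of f dx is f̄ dx. Then for every arc (interval) J ⊆ 𝕋 with ∫_J f(y) dy ≥ f̄ |J|, one has ∫_J |T(y) − y| f(y) dy ≥ c ( ∫_J f(y) dy − f̄ |J| )² / ‖f‖_{L^∞(𝕋)}. -/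
open MeasureTheory
open scoped ENNReal

open Set

lemma coe_toIcoMod' (c u : ℝ) :
    ((toIcoMod one_pos c u : ℝ) : UnitAddCircle) = (u : UnitAddCircle) := by
  rw [QuotientAddGroup.eq_iff_sub_mem, toIcoMod_sub_self]
  exact AddSubgroup.zsmul_mem_zmultiples _ _

lemma mem_arc' {c d : ℝ} (hd : d ≤ c + 1) (u : ℝ) :
    (u : UnitAddCircle) ∈ (fun x : ℝ => (x : UnitAddCircle)) '' Ico c d ↔
      toIcoMod one_pos c u ∈ Ico c d := by
  constructor
  · rintro ⟨v, hv, hvu⟩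
    have h1 : toIcoMod one_pos c v = v := (toIcoMod_eq_self one_pos).mpr ⟨hv.1, hv.2.trans_le hd⟩
    have h2 : toIcoMod one_pos c u = toIcoMod one_pos c v := by
      rw [toIcoMod_eq_toIcoMod]
      have : ((v : ℝ) : UnitAddCircle) = u := hvu
      rw [QuotientAddGroup.eq_iff_sub_mem, AddSubgroup.mem_zmultiples_iff] at this
      obtain ⟨k, hk⟩ := this
      exact ⟨k, by simp only [zsmul_eq_mul] at hk ⊢; linarith⟩
    rw [h2, h1]; exact hv
  · intro h
    exact ⟨toIcoMod one_pos c u, h, coe_toIcoMod' c u⟩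

lemma arc_measurable' {c d : ℝ} (hd : d ≤ c + 1) :
    MeasurableSet ((fun x : ℝ => (x : UnitAddCircle)) '' Ico c d) := by
  have : (fun x : ℝ => (x : UnitAddCircle)) '' Ico c d
      = (fun y : UnitAddCircle => ((AddCircle.equivIco 1 c y : ℝ))) ⁻¹' Ico c d := by
    ext y
    obtain ⟨u, rfl⟩ := QuotientAddGroup.mk_surjective y
    rw [mem_arc' hd]
    simp [AddCircle.equivIco, QuotientAddGroup.equivIcoMod_coe]
  rw [this]
  have hm : Measurable fun y : UnitAddCircle => ((AddCircle.equivIco 1 c y : ℝ)) :=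
    measurable_subtype_coe.comp (AddCircle.measurableEquivIco 1 c).measurable
  exact hm measurableSet_Ico

lemma arc_volume_le' {c d : ℝ} (hd : d ≤ c + 1) :
    volume ((fun x : ℝ => (x : UnitAddCircle)) '' Ico c d) ≤ ENNReal.ofReal (d - c) := by
  rw [AddCircle.add_projection_respects_measure 1 c (arc_measurable' hd)]
  have hsub : QuotientAddGroup.mk ⁻¹' ((fun x : ℝ => (x : UnitAddCircle)) '' Ico c d)
      ∩ Ioc c (c + 1) ⊆ Ioc c d ∪ {c + 1} := by
    rintro x ⟨hx, hx2⟩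
    have hm : toIcoMod one_pos c x ∈ Ico c d := (mem_arc' hd x).mp hx
    have hk : x - toIcoMod one_pos c x = ((toIcoDiv one_pos c x : ℤ) : ℝ) := by
      have h := self_sub_toIcoMod one_pos c x
      simpa [zsmul_eq_mul] using h
    have hmem := toIcoMod_mem_Ico one_pos c x
    have h01 : toIcoDiv one_pos c x = 0 ∨ toIcoDiv one_pos c x = 1 := by
      have h1 : (-1 : ℝ) < toIcoDiv one_pos c x := by
        have := hmem.2; have := hx2.1; linarith
      have h2 : (toIcoDiv one_pos c x : ℝ) ≤ 1 := by
        have := hmem.1; have := hx2.2; linarith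
      have h1' : (-1 : ℤ) < toIcoDiv one_pos c x := by exact_mod_cast h1
      have h2' : toIcoDiv one_pos c x ≤ 1 := by exact_mod_cast h2
      omega
    rcases h01 with h | h
    · left
      rw [h] at hk
      simp only [Int.cast_zero] at hk
      exact ⟨hx2.1, by have := hm.2; linarith⟩
    · right
      rw [h] at hk
      simp only [Int.cast_one] at hk
      have : x = c + 1 := by have := hm.1; have := hx2.2; linarith
      simp [this]
  calc volume (QuotientAddGroup.mk ⁻¹' ((fun x : ℝ => (x : UnitAddCircle)) '' Ico c d)
      ∩ Ioc c (c + 1)) ≤ volume (Ioc c d ∪ {c + 1}) := measure_mono hsub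
    _ ≤ volume (Ioc c d) + volume ({c + 1} : Set ℝ) := measure_union_le _ _
    _ = ENNReal.ofReal (d - c) := by
        rw [Real.volume_Ioc, Real.volume_singleton, add_zero]

lemma exists_lift' (x : UnitAddCircle) (u : ℝ) :
    ∃ v : ℝ, (v : UnitAddCircle) = x ∧ |v - u| = dist x ((u : UnitAddCircle)) := by
  obtain ⟨w, rfl⟩ := QuotientAddGroup.mk_surjective x
  refine ⟨w - round (w - u), ?_, ?_⟩
  · rw [QuotientAddGroup.eq_iff_sub_mem]
    have : (w - (round (w - u) : ℝ)) - w = (-(round (w-u)) : ℤ) • (1:ℝ) := by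
      push_cast [zsmul_eq_mul]; ring
    rw [this]
    exact AddSubgroup.zsmul_mem_zmultiples _ _
  · have h1 : dist ((w : UnitAddCircle)) ((u : UnitAddCircle)) = ‖((w - u : ℝ) : UnitAddCircle)‖ := by
      rw [dist_eq_norm]
      norm_cast
    rw [h1, UnitAddCircle.norm_eq]
    ring_nf

lemma strip_lemma {a b s : ℝ} {y Ty : UnitAddCircle}
    (hy : y ∈ (fun x : ℝ => (x : UnitAddCircle)) '' Ico a b)
    (hTy : Ty ∉ (fun x : ℝ => (x : UnitAddCircle)) '' Ico a b)
    (hd : dist Ty y < s) :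
    y ∈ (fun x : ℝ => (x : UnitAddCircle)) '' Ico a (min b (a + s)) ∪
      (fun x : ℝ => (x : UnitAddCircle)) '' Ico (max a (b - s)) b := by
  obtain ⟨u, hu, rfl⟩ := hy
  obtain ⟨v, hv, hvd⟩ := exists_lift' Ty u
  have hvs : |v - u| < s := hvd ▸ hd
  have hvnot : v ∉ Ico a b := fun hmem => hTy ⟨v, hmem, hv⟩
  rcases lt_or_ge v a with h | h
  · left
    refine ⟨u, ⟨hu.1, lt_min hu.2 ?_⟩, rfl⟩
    have := abs_lt.mp hvs
    linarith [this.1]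
  · right
    have hvb : b ≤ v := by
      by_contra hc
      exact hvnot ⟨h, lt_of_not_ge hc⟩
    have habs := abs_lt.mp hvs
    refine ⟨u, ⟨max_le hu.1 (by linarith [habs.2]), hu.2⟩, rfl⟩


/-- Local mass-excess lower bound (key step of Theorem 2): there is an absolute
constant `c > 0` such that if `f : 𝕋 → ℝ` is continuous, `f ≥ 0`, not identically
zero, with mean `f̄`, and `T : 𝕋 → 𝕋` is a measurable map pushing `f dx` forward to
`f̄ dx`, then for every arc `J` (the image of a real interval `[a,b)` with `b ≤ a+1`)
carrying mass at least `f̄ |J|`, one has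
`∫_J |T(y) - y| f(y) dy ≥ c (∫_J f - f̄ |J|)² / ‖f‖_∞`. -/
theorem stmt19 : ∃ c : ℝ, 0 < c ∧
    ∀ f : UnitAddCircle → ℝ, Continuous f → (∀ x, 0 ≤ f x) → (∃ x, f x ≠ 0) →
    ∀ T : UnitAddCircle → UnitAddCircle, Measurable T →
      (volume.withDensity fun x => ENNReal.ofReal (f x)).map T =
        volume.withDensity (fun _ => ENNReal.ofReal (∫ x, f x)) →
    ∀ a b : ℝ, a ≤ b → b ≤ a + 1 →
      (∫ x, f x) * (b - a) ≤
        (∫ y in (fun x : ℝ => (x : UnitAddCircle)) '' Set.Ico a b, f y) →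
      c * ((∫ y in (fun x : ℝ => (x : UnitAddCircle)) '' Set.Ico a b, f y) -
            (∫ x, f x) * (b - a)) ^ 2 / (⨆ x, |f x|) ≤
        ∫ y in (fun x : ℝ => (x : UnitAddCircle)) '' Set.Ico a b, dist (T y) y * f y := by
  refine ⟨1/8, by norm_num, ?_⟩
  intro f hfc hf0 hfne T hT hpush a b hab hba hmass
  set J : Set UnitAddCircle := (fun x : ℝ => (x : UnitAddCircle)) '' Ico a b with hJdef
  set M : ℝ := ⨆ x, |f x| with hMdef
  set Fbar : ℝ := ∫ x, f x with hFdef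
  set IJ : ℝ := ∫ y in J, f y with hIJdef
  set E : ℝ := IJ - Fbar * (b - a) with hEdef
  have hJmeas : MeasurableSet J := arc_measurable' hba
  have hE0 : 0 ≤ E := by simp only [hEdef]; linarith
  -- boundedness facts
  have hbdd : BddAbove (range fun x => |f x|) :=
    (isCompact_range (continuous_abs.comp hfc)).bddAbove
  have hfM : ∀ x, f x ≤ M := fun x => (le_abs_self (f x)).trans (le_ciSup hbdd x)
  have hM0 : 0 < M := by
    obtain ⟨x0, hx0⟩ := hfne
    exact lt_of_lt_of_le (abs_pos.mpr hx0) (le_ciSup hbdd x0)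
  have hfint : Integrable f volume := by
    rw [← integrableOn_univ]
    exact hfc.continuousOn.integrableOn_compact isCompact_univ
  have hRHS0 : 0 ≤ ∫ y in J, dist (T y) y * f y :=
    setIntegral_nonneg hJmeas fun y _ => mul_nonneg dist_nonneg (hf0 y)
  rcases eq_or_lt_of_le hE0 with hE | hEpos
  · rw [← hE]
    simpa using hRHS0
  -- total mass facts
  have hvol_univ : (volume : Measure UnitAddCircle) univ = ENNReal.ofReal 1 :=
    AddCircle.measure_univ 1
  have hIJ_le : IJ ≤ Fbar := by
    rw [hIJdef, hFdef]
    exact setIntegral_le_integral hfint (Filter.Eventually.of_forall hf0)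
  have hFbar0 : 0 ≤ Fbar := integral_nonneg hf0
  have hFbar_le_M : Fbar ≤ M := by
    have h1 : Fbar ≤ ∫ _x : UnitAddCircle, M := integral_mono hfint (integrable_const M) hfM
    have h2 : (∫ _x : UnitAddCircle, M) = M := by
      rw [integral_const, measureReal_def, hvol_univ]
      simp
    linarith
  have hE_le_M : E ≤ M := by
    have : 0 ≤ Fbar * (b - a) := mul_nonneg hFbar0 (by linarith)
    simp only [hEdef]; linarith
  set s : ℝ := E / (4 * M) with hsdef
  have hspos : 0 < s := div_pos hEpos (by linarith)
  have hs1 : s ≤ 1 := by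
    rw [hsdef, div_le_one (by linarith)]
    linarith
  -- set A
  set A : Set UnitAddCircle := (J ∩ T ⁻¹' Jᶜ) ∩ {y | s ≤ dist (T y) y} with hAdef
  have hgm : Measurable fun y : UnitAddCircle => dist (T y) y := hT.dist measurable_id
  have hAmeas : MeasurableSet A :=
    ((hJmeas.inter ((hJmeas.compl).preimage hT)).inter (hgm measurableSet_Ici))
  have hA_sub_J : A ⊆ J := fun y hy => hy.1.1
  -- strips
  set S1 : Set UnitAddCircle := (fun x : ℝ => (x : UnitAddCircle)) '' Ico a (min b (a + s)) with hS1def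
  set S2 : Set UnitAddCircle := (fun x : ℝ => (x : UnitAddCircle)) '' Ico (max a (b - s)) b with hS2def
  have hS1meas : MeasurableSet S1 := arc_measurable' (le_trans (min_le_left _ _) hba)
  have hS2meas : MeasurableSet S2 := arc_measurable' (by
    rcases le_or_gt a (b - s) with h | h
    · rw [max_eq_right h]; linarith
    · rw [max_eq_left h.le]; linarith)
  have hS1vol : volume S1 ≤ ENNReal.ofReal s := by
    refine le_trans (arc_volume_le' (le_trans (min_le_left _ _) hba)) ?_
    exact ENNReal.ofReal_le_ofReal (by rcases min_cases b (a + s) with ⟨h, _⟩ | ⟨h, _⟩ <;> rw [h] <;> linarith)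
  have hS2vol : volume S2 ≤ ENNReal.ofReal s := by
    refine le_trans (arc_volume_le' (by
      rcases le_or_gt a (b - s) with h | h
      · rw [max_eq_right h]; linarith
      · rw [max_eq_left h.le]; linarith)) ?_
    exact ENNReal.ofReal_le_ofReal (by rcases max_cases a (b - s) with ⟨h, _⟩ | ⟨h, _⟩ <;> rw [h] <;> linarith)
  -- the measure μ
  set μ : Measure UnitAddCircle := volume.withDensity (fun x => ENNReal.ofReal (f x)) with hμdef
  have hμ_set : ∀ (S : Set UnitAddCircle), MeasurableSet S →
      μ S = ENNReal.ofReal (∫ y in S, f y) := by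
    intro S hS
    rw [hμdef, withDensity_apply _ hS,
      ← ofReal_integral_eq_lintegral_ofReal hfint.integrableOn
        (Filter.Eventually.of_forall hf0)]
  have hμ_le : ∀ (S : Set UnitAddCircle), MeasurableSet S → volume S ≤ ENNReal.ofReal s →
      μ S ≤ ENNReal.ofReal (M * s) := by
    intro S hS hSv
    rw [hμdef, withDensity_apply _ hS]
    calc ∫⁻ y in S, ENNReal.ofReal (f y) ∂volume
        ≤ ∫⁻ _y in S, ENNReal.ofReal M ∂volume :=
          lintegral_mono fun y => ENNReal.ofReal_le_ofReal (hfM y)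
      _ = ENNReal.ofReal M * volume S := by rw [setLIntegral_const]
      _ ≤ ENNReal.ofReal M * ENNReal.ofReal s := mul_le_mul_right hSv _
      _ = ENNReal.ofReal (M * s) := (ENNReal.ofReal_mul hM0.le).symm
  -- pushforward bound
  have hpre : μ (T ⁻¹' J) ≤ ENNReal.ofReal (Fbar * (b - a)) := by
    have h1 : μ (T ⁻¹' J) = (μ.map T) J := (Measure.map_apply hT hJmeas).symm
    rw [h1, hpush, withDensity_apply _ hJmeas, setLIntegral_const]
    calc ENNReal.ofReal Fbar * volume J
        ≤ ENNReal.ofReal Fbar * ENNReal.ofReal (b - a) :=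
          mul_le_mul_right (arc_volume_le' hba) _
      _ = ENNReal.ofReal (Fbar * (b - a)) := (ENNReal.ofReal_mul hFbar0).symm
  -- covering
  have hcover : J ⊆ A ∪ (T ⁻¹' J ∪ (S1 ∪ S2)) := by
    intro y hy
    by_cases hTy : T y ∈ J
    · exact Or.inr (Or.inl hTy)
    · rcases le_or_gt s (dist (T y) y) with hsd | hsd
      · exact Or.inl ⟨⟨hy, hTy⟩, hsd⟩
      · exact Or.inr (Or.inr (strip_lemma hy hTy hsd))
  have hμJ_le : μ J ≤ μ A + (ENNReal.ofReal (Fbar * (b - a)) +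
      (ENNReal.ofReal (M * s) + ENNReal.ofReal (M * s))) := by
    calc μ J ≤ μ (A ∪ (T ⁻¹' J ∪ (S1 ∪ S2))) := measure_mono hcover
      _ ≤ μ A + μ (T ⁻¹' J ∪ (S1 ∪ S2)) := measure_union_le _ _
      _ ≤ μ A + (μ (T ⁻¹' J) + μ (S1 ∪ S2)) := by
          exact add_le_add_right (measure_union_le _ _) _
      _ ≤ μ A + (μ (T ⁻¹' J) + (μ S1 + μ S2)) := by
          exact add_le_add_right (add_le_add_right (measure_union_le _ _) _) _
      _ ≤ _ := by
          exact add_le_add_right (add_le_add hpre (add_le_add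
            (hμ_le S1 hS1meas hS1vol) (hμ_le S2 hS2meas hS2vol))) _
  -- extract real inequality on A
  have hC_eq : ENNReal.ofReal (Fbar * (b - a)) + (ENNReal.ofReal (M * s) + ENNReal.ofReal (M * s))
      = ENNReal.ofReal (Fbar * (b - a) + (M * s + M * s)) := by
    rw [ENNReal.ofReal_add (mul_nonneg hFbar0 (by linarith))
        (add_nonneg (mul_nonneg hM0.le hspos.le) (mul_nonneg hM0.le hspos.le)),
      ENNReal.ofReal_add (mul_nonneg hM0.le hspos.le) (mul_nonneg hM0.le hspos.le)]
  have hMs : M * s + M * s = E / 2 := by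
    rw [hsdef]; field_simp; ring
  have hhalf : ENNReal.ofReal (E / 2) ≤ μ A := by
    have h6 : ENNReal.ofReal IJ ≤ μ A + ENNReal.ofReal (Fbar * (b - a) + (M * s + M * s)) := by
      rw [← hC_eq, ← hμ_set J hJmeas]
      exact hμJ_le
    have h7 : ENNReal.ofReal IJ - ENNReal.ofReal (Fbar * (b - a) + (M * s + M * s)) ≤ μ A :=
      tsub_le_iff_right.mpr h6
    refine le_trans (le_of_eq ?_) h7
    rw [← ENNReal.ofReal_sub _ (add_nonneg (mul_nonneg hFbar0 (by linarith))
      (add_nonneg (mul_nonneg hM0.le hspos.le) (mul_nonneg hM0.le hspos.le)))]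
    congr 1
    rw [hMs, hEdef]
    ring
  have hAf : E / 2 ≤ ∫ y in A, f y := by
    rw [hμ_set A hAmeas] at hhalf
    exact (ENNReal.ofReal_le_ofReal_iff
      (setIntegral_nonneg hAmeas fun y _ => hf0 y)).mp hhalf
  -- integrability of the transport integrand
  have hgint : Integrable (fun y => dist (T y) y * f y) volume := by
    refine Integrable.mono' (integrable_const M)
      ((hgm.mul hfc.measurable).aestronglyMeasurable) ?_
    refine Filter.Eventually.of_forall fun y => ?_
    rw [Real.norm_eq_abs, abs_of_nonneg (mul_nonneg dist_nonneg (hf0 y))]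
    have hd1 : dist (T y) y ≤ 1 := by
      rw [dist_eq_norm]
      have := AddCircle.norm_le_half_period (1:ℝ) one_ne_zero (x := T y - y)
      simp only [abs_one] at this
      linarith
    calc dist (T y) y * f y ≤ 1 * M :=
          mul_le_mul hd1 (hfM y) (hf0 y) one_pos.le
      _ = M := one_mul M
  -- final chain
  have hchain1 : ∫ y in A, dist (T y) y * f y ≤ ∫ y in J, dist (T y) y * f y := by
    refine setIntegral_mono_set hgint.integrableOn
      (Filter.Eventually.of_forall fun y => mul_nonneg dist_nonneg (hf0 y))
      (HasSubset.Subset.eventuallyLE hA_sub_J)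
  have hchain2 : ∫ y in A, s * f y ≤ ∫ y in A, dist (T y) y * f y := by
    refine setIntegral_mono_on ((hfint.const_mul s).integrableOn)
      hgint.integrableOn hAmeas fun y hy => ?_
    exact mul_le_mul_of_nonneg_right hy.2 (hf0 y)
  have hchain3 : (∫ y in A, s * f y) = s * ∫ y in A, f y := integral_const_mul s f
  have hfinal : s * (E / 2) ≤ ∫ y in J, dist (T y) y * f y := by
    have := mul_le_mul_of_nonneg_left hAf hspos.le
    linarith [hchain1, hchain2, hchain3.ge, hchain3.le, this]
  refine le_trans (le_of_eq ?_) hfinal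
  rw [hsdef]
  field_simp
  ring
end
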